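/- Let D be a linearly connected digraph with exactly two strong components D_1 and D_2, both nontrivial. Fix i ∈ ZMod κ_1 and j ∈ ZMod κ_2. Then (i, j) is an edge of the bipartite graph B_{1,2} if and only if there exist vertices u ∈ U_i^{(1)} and v ∈ U_j^{(2)} and a positive integer s such that D has a directed (u,v)-walk of length 2sκ_1κ_2. -/

import Mathlib

/-- A digraph: a finite vertex type with an irreflexive arc relation (no loops). -/
structure Digraph' (V : Type*) where
  Adj : V → V → Prop
  irrefl : ∀ v, ¬ Adj v v

namespace Digraph'

variable {V : Type*}

/-- There is a directed walk of length `m` from `x` to `y` in `D`;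
i.e. `y` is an `m`-step prey of `x`. -/
def HasWalk (D : Digraph' V) (m : ℕ) (x y : V) : Prop :=
  ∃ f : ℕ → V, f 0 = x ∧ f m = y ∧ ∀ t, t < m → D.Adj (f t) (f (t + 1))

/-- There is a directed walk of length `m` from `x` to `y` staying inside `S`. -/
def HasWalkIn (D : Digraph' V) (S : Set V) (m : ℕ) (x y : V) : Prop :=
  ∃ f : ℕ → V, f 0 = x ∧ f m = y ∧ (∀ t, t ≤ m → f t ∈ S) ∧
    ∀ t, t < m → D.Adj (f t) (f (t + 1))

/-- The `m`-step competition graph `C(D^m)` of `D`. -/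
def compGraph (D : Digraph' V) (m : ℕ) : SimpleGraph V where
  Adj u v := u ≠ v ∧ ∃ z, D.HasWalk m u z ∧ D.HasWalk m v z
  symm := by
    constructor
    rintro u v ⟨hne, z, h1, h2⟩
    exact ⟨hne.symm, z, h2, h1⟩
  loopless := ⟨fun v h => h.1 rfl⟩

/-- The sequence `{C(D^m)}_{m ≥ 1}` converges. -/
def CompConverges (D : Digraph' V) : Prop :=
  ∃ N : ℕ, 1 ≤ N ∧ ∀ m, N ≤ m → D.compGraph m = D.compGraph N

/-- The sequence `{C(D^m)}_{m ≥ 1}` converges to the graph `G`. -/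
def CompConvergesTo (D : Digraph' V) (G : SimpleGraph V) : Prop :=
  ∃ N : ℕ, 1 ≤ N ∧ ∀ m, N ≤ m → D.compGraph m = G

/-- `D` is linearly connected with strong components `Vset 1, …, Vset η`. -/
structure IsLinConn (D : Digraph' V) (η : ℕ) (Vset : ℕ → Set V) : Prop where
  nonempty : ∀ i, 1 ≤ i → i ≤ η → (Vset i).Nonempty
  cover : ∀ v : V, ∃ i, 1 ≤ i ∧ i ≤ η ∧ v ∈ Vset i
  disjoint' : ∀ i j, 1 ≤ i → i ≤ η → 1 ≤ j → j ≤ η →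
      ∀ v : V, v ∈ Vset i → v ∈ Vset j → i = j
  strong : ∀ i, 1 ≤ i → i ≤ η → ∀ x ∈ Vset i, ∀ y ∈ Vset i,
      ∃ m, D.HasWalkIn (Vset i) m x y
  arcs : ∀ x y : V, D.Adj x y → ∃ i, 1 ≤ i ∧
      ((i ≤ η ∧ x ∈ Vset i ∧ y ∈ Vset i) ∨
       (i + 1 ≤ η ∧ x ∈ Vset i ∧ y ∈ Vset (i + 1)))
  linked : ∀ i, 1 ≤ i → i + 1 ≤ η → ∃ x ∈ Vset i, ∃ y ∈ Vset (i + 1), D.Adj x y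

/-- A component with vertex set `S` is trivial if `S` is a singleton. -/
def IsTrivialComp (S : Set V) : Prop := ∃ v : V, S = {v}

/-- `κ` is the index of imprimitivity of the (strong) component with vertex set `S`:
the gcd of the lengths of all closed directed walks inside `S`. -/
def IsImprimIndex (D : Digraph' V) (S : Set V) (κ : ℕ) : Prop :=
  (∀ (x : V) (m : ℕ), x ∈ S → 0 < m → D.HasWalkIn S m x x → κ ∣ m) ∧
  ∀ d : ℕ, (∀ (x : V) (m : ℕ), x ∈ S → 0 < m → D.HasWalkIn S m x x → d ∣ m) → d ∣ κ

/-- `u` is an imprimitivity labelling on `S`: along any arc inside `S` the label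
increases by one.  Its fibers are the sets of imprimitivity. -/
def IsImprimLabelling (D : Digraph' V) (S : Set V) {κ : ℕ} (u : V → ZMod κ) : Prop :=
  ∀ x ∈ S, ∀ y ∈ S, D.Adj x y → u y = u x + 1

lemma hasWalkIn_refl (D : Digraph' V) (S : Set V) {x : V} (hx : x ∈ S) :
    D.HasWalkIn S 0 x x :=
  ⟨fun _ => x, rfl, rfl, fun _ _ => hx, fun t ht => absurd ht (Nat.not_lt_zero t)⟩

lemma HasWalkIn.trans {D : Digraph' V} {S : Set V} {m n : ℕ} {x y z : V}
    (h1 : D.HasWalkIn S m x y) (h2 : D.HasWalkIn S n y z) :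
    D.HasWalkIn S (m + n) x z := by
  obtain ⟨f, hf0, hfm, hfS, hfA⟩ := h1
  obtain ⟨g, hg0, hgn, hgS, hgA⟩ := h2
  refine ⟨fun t => if t < m then f t else g (t - m), ?_, ?_, ?_, ?_⟩
  · by_cases h : 0 < m
    · simp [h, hf0]
    · have hm : m = 0 := by omega
      subst hm
      simp only [Nat.lt_irrefl, if_false, Nat.sub_zero]
      rw [hg0, ← hfm, hf0]
  · have : ¬ m + n < m := by omega
    simp only [this, if_false]
    rw [show m + n - m = n from by omega, hgn]
  · intro t ht
    by_cases h : t < m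
    · simpa [h] using hfS t (by omega)
    · simp only [h, if_false]
      exact hgS (t - m) (by omega)
  · intro t ht
    rcases lt_trichotomy (t + 1) m with h | h | h
    · have h' : t < m := by omega
      simp only [h, h', if_true]
      exact hfA t h'
    · have h' : t < m := by omega
      have h'' : ¬ t + 1 < m := by omega
      simp only [h', h'', if_true, if_false]
      rw [show t + 1 - m = 0 from by omega, hg0, ← hfm, ← h]
      exact hfA t h'
    · have h' : ¬ t < m := by omega
      have h'' : ¬ t + 1 < m := by omega
      simp only [h', h'', if_false]
      rw [show t + 1 - m = (t - m) + 1 from by omega]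
      exact hgA (t - m) (by omega)

lemma HasWalkIn.hasWalk {D : Digraph' V} {S : Set V} {m : ℕ} {x y : V}
    (h : D.HasWalkIn S m x y) : D.HasWalk m x y := by
  obtain ⟨f, h0, hm, _, hA⟩ := h
  exact ⟨f, h0, hm, hA⟩

lemma hasWalk_iff_univ {D : Digraph' V} {m : ℕ} {x y : V} :
    D.HasWalk m x y ↔ D.HasWalkIn Set.univ m x y := by
  constructor
  · rintro ⟨f, h0, hm, hA⟩
    exact ⟨f, h0, hm, fun _ _ => Set.mem_univ _, hA⟩
  · exact HasWalkIn.hasWalk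

lemma HasWalk.trans {D : Digraph' V} {m n : ℕ} {x y z : V}
    (h1 : D.HasWalk m x y) (h2 : D.HasWalk n y z) : D.HasWalk (m + n) x z :=
  hasWalk_iff_univ.mpr ((hasWalk_iff_univ.mp h1).trans (hasWalk_iff_univ.mp h2))

lemma Adj.hasWalk {D : Digraph' V} {x y : V} (h : D.Adj x y) : D.HasWalk 1 x y := by
  refine ⟨fun t => if t = 0 then x else y, by simp, by simp, ?_⟩
  intro t ht
  have : t = 0 := by omega
  simp [this, h]

lemma HasWalkIn.mul {D : Digraph' V} {S : Set V} {m : ℕ} {x : V}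
    (h : D.HasWalkIn S m x x) (e : ℕ) : D.HasWalkIn S (e * m) x x := by
  induction e with
  | zero => simpa using hasWalkIn_refl D S (h.choose_spec.1 ▸ h.choose_spec.2.2.1 0 (by omega))
  | succ n ih => rw [Nat.succ_mul]; exact ih.trans h


lemma hasWalkIn_label {D : Digraph' V} {S : Set V} {κ : ℕ} {u : V → ZMod κ}
    (hu : D.IsImprimLabelling S u) {m : ℕ} {x y : V}
    (h : D.HasWalkIn S m x y) : u y = u x + (m : ZMod κ) := by
  obtain ⟨f, h0, hm, hS, hA⟩ := h
  have key : ∀ t, t ≤ m → u (f t) = u x + (t : ZMod κ) := by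
    intro t
    induction t with
    | zero => intro _; simp [h0]
    | succ n ih =>
      intro hn
      have h1 := hu (f n) (hS n (by omega)) (f (n + 1)) (hS (n + 1) hn) (hA n (by omega))
      rw [h1, ih (by omega)]
      push_cast
      ring
  rw [← hm]
  exact key m le_rfl

lemma exists_pos_closed {D : Digraph' V} {S : Set V}
    (hstrong : ∀ x ∈ S, ∀ y ∈ S, ∃ m, D.HasWalkIn S m x y)
    (hnt : ¬ IsTrivialComp S) {v : V} (hv : v ∈ S) :
    ∃ a, 0 < a ∧ D.HasWalkIn S a v v := by
  have hz : ∃ z ∈ S, z ≠ v := by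
    by_contra h
    push_neg at h
    exact hnt ⟨v, Set.eq_singleton_iff_unique_mem.mpr ⟨hv, h⟩⟩
  obtain ⟨z, hzS, hzv⟩ := hz
  obtain ⟨m1, w1⟩ := hstrong v hv z hzS
  obtain ⟨m2, w2⟩ := hstrong z hzS v hv
  have hm1 : 0 < m1 := by
    rcases Nat.eq_zero_or_pos m1 with h | h
    · subst h
      obtain ⟨f, h0, hm, _, _⟩ := w1
      exact absurd (h0 ▸ hm).symm hzv
    · exact h
  exact ⟨m1 + m2, by omega, w1.trans w2⟩

lemma kappa_pos {D : Digraph' V} {S : Set V} {κ : ℕ}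
    (hstrong : ∀ x ∈ S, ∀ y ∈ S, ∃ m, D.HasWalkIn S m x y)
    (hnt : ¬ IsTrivialComp S) (hκ : D.IsImprimIndex S κ) {v : V} (hv : v ∈ S) :
    0 < κ := by
  obtain ⟨a, ha, hw⟩ := exists_pos_closed hstrong hnt hv
  exact Nat.pos_of_dvd_of_pos (hκ.1 v a hv ha hw) ha

lemma eventual_closed {D : Digraph' V} {S : Set V} {κ : ℕ}
    (hstrong : ∀ x ∈ S, ∀ y ∈ S, ∃ m, D.HasWalkIn S m x y)
    (hnt : ¬ IsTrivialComp S) (hκ : D.IsImprimIndex S κ) {v : V} (hv : v ∈ S) :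
    ∃ T, ∀ t, T ≤ t → D.HasWalkIn S (t * κ) v v := by
  classical
  obtain ⟨a, hapos, haw⟩ := exists_pos_closed hstrong hnt hv
  set A : ℕ → Prop := fun m => D.HasWalkIn S m v v with hA
  have hA0 : A 0 := hasWalkIn_refl D S hv
  have hdvd : ∀ m, A m → κ ∣ m := by
    intro m hm
    rcases Nat.eq_zero_or_pos m with h | h
    · simp [h]
    · exact hκ.1 v m hv h hm
  have hex : ∃ n, 0 < n ∧ ∃ p q, A p ∧ A q ∧ p = q + n :=
    ⟨a, hapos, a, 0, haw, hA0, (Nat.zero_add a).symm⟩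
  set d0 := Nat.find hex with hd0
  obtain ⟨hd0pos, P, Q, hAP, hAQ, hPQ⟩ := Nat.find_spec hex
  have hdiv : ∀ m, A m → d0 ∣ m := by
    intro m hm
    set r := m % d0 with hr
    set e := m / d0 with he
    have hmod := Nat.div_add_mod m d0
    rcases Nat.eq_zero_or_pos r with h | h
    · exact Nat.dvd_of_mod_eq_zero h
    · exfalso
      have hmz : (d0 : ℤ) * e + r = m := by exact_mod_cast hmod
      have hpz : (P : ℤ) = Q + d0 := by exact_mod_cast hPQ
      have heq : m + e * Q = e * P + r := by
        zify
        linear_combination -hmz - (e : ℤ) * hpz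
      have h1 : A (m + e * Q) := hm.trans (hAQ.mul e)
      have h2 : A (e * P) := hAP.mul e
      have : r < d0 := Nat.mod_lt m hd0pos
      exact Nat.find_min hex this ⟨h, m + e * Q, e * P, h1, h2, heq⟩
  have hκd0 : κ ∣ d0 := by
    have h1 := hdvd P hAP
    have h2 := hdvd Q hAQ
    have := Nat.dvd_sub h1 h2
    rwa [show P - Q = d0 from by omega] at this
  have hd0κ : d0 ∣ κ := by
    apply hκ.2
    intro z m hz hm hw
    obtain ⟨p1, w1⟩ := hstrong v hv z hz
    obtain ⟨p2, w2⟩ := hstrong z hz v hv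
    have h1 : A (p1 + p2) := w1.trans w2
    have h2 : A (p1 + m + p2) := (w1.trans hw).trans w2
    have d1 := hdiv _ h1
    have d2 := hdiv _ h2
    have := Nat.dvd_sub d2 d1
    rwa [show p1 + m + p2 - (p1 + p2) = m from by omega] at this
  have hd0κeq : d0 = κ := Nat.dvd_antisymm hd0κ hκd0
  subst hd0κeq
  obtain ⟨q', hQ⟩ := hdvd Q hAQ
  rcases Nat.eq_zero_or_pos q' with h | h
  · refine ⟨0, fun t _ => ?_⟩
    subst h
    rw [Nat.mul_zero] at hQ
    rw [hQ] at hPQ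
    rw [show P = d0 from by omega] at hAP
    exact hAP.mul t
  · refine ⟨q' * q', fun t ht => ?_⟩
    set α := t / q' with hα
    set β := t % q' with hβ
    have hβq : β < q' := Nat.mod_lt t h
    have hmod := Nat.div_add_mod t q'
    have hαq : q' ≤ α := Nat.le_div_iff_mul_le h |>.mpr (by nlinarith)
    have hβα : β ≤ α := by omega
    have hw : A ((α - β) * Q + β * P) := (hAQ.mul (α - β)).trans (hAP.mul β)
    have heq : (α - β) * Q + β * P = t * d0 := by
      zify [hβα]
      have ht' : (q' : ℤ) * α + β = t := by exact_mod_cast hmod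
      have hPQ' : P = Q + d0 := by rw [hd0, hPQ]
      rw [hPQ', hQ]
      push_cast
      linear_combination (d0 : ℤ) * ht'
    rwa [heq] at hw



lemma exists_label_from {D : Digraph' V} {S : Set V} {κ : ℕ} {u : V → ZMod κ}
    (hu : D.IsImprimLabelling S u)
    (hstrong : ∀ x ∈ S, ∀ y ∈ S, ∃ m, D.HasWalkIn S m x y)
    (hnt : ¬ IsTrivialComp S) (hκ : D.IsImprimIndex S κ) {v : V} (hv : v ∈ S)
    (j : ZMod κ) : ∃ y ∈ S, u y = j ∧ ∃ c, D.HasWalkIn S c v y := by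
  have hκpos : 0 < κ := kappa_pos hstrong hnt hκ hv
  haveI : NeZero κ := ⟨hκpos.ne'⟩
  obtain ⟨a, hapos, f, h0, ha, hS, hA⟩ := exists_pos_closed hstrong hnt hv
  have hκa : κ ∣ a := hκ.1 v a hv hapos ⟨f, h0, ha, hS, hA⟩
  have hκlea : κ ≤ a := Nat.le_of_dvd hapos hκa
  set t := (j - u v).val with htdef
  have ht : t < κ := ZMod.val_lt _
  have hwalk : D.HasWalkIn S t v (f t) :=
    ⟨f, h0, rfl, fun s hs => hS s (by omega), fun s hs => hA s (by omega)⟩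
  refine ⟨f t, hS t (by omega), ?_, t, hwalk⟩
  have := hasWalkIn_label hu hwalk
  rw [this, htdef, ZMod.natCast_val, ZMod.cast_id]
  ring

lemma exists_label_to {D : Digraph' V} {S : Set V} {κ : ℕ} {u : V → ZMod κ}
    (hu : D.IsImprimLabelling S u)
    (hstrong : ∀ x ∈ S, ∀ y ∈ S, ∃ m, D.HasWalkIn S m x y)
    (hnt : ¬ IsTrivialComp S) (hκ : D.IsImprimIndex S κ) {v : V} (hv : v ∈ S)
    (i : ZMod κ) : ∃ x ∈ S, u x = i ∧ ∃ c, D.HasWalkIn S c x v := by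
  have hκpos : 0 < κ := kappa_pos hstrong hnt hκ hv
  haveI : NeZero κ := ⟨hκpos.ne'⟩
  obtain ⟨a, hapos, f, h0, ha, hS, hA⟩ := exists_pos_closed hstrong hnt hv
  have hκa : κ ∣ a := hκ.1 v a hv hapos ⟨f, h0, ha, hS, hA⟩
  have hκlea : κ ≤ a := Nat.le_of_dvd hapos hκa
  set t := (u v - i).val with htdef
  have ht : t < κ := ZMod.val_lt _
  have hta : t ≤ a := by omega
  have hpre : D.HasWalkIn S (a - t) v (f (a - t)) :=
    ⟨f, h0, rfl, fun s hs => hS s (by omega), fun s hs => hA s (by omega)⟩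
  have hsuf : D.HasWalkIn S t (f (a - t)) v := by
    refine ⟨fun s => f (a - t + s), rfl, ?_, fun s hs => hS _ (by omega), ?_⟩
    · show f (a - t + t) = v
      rw [show a - t + t = a from by omega, ha]
    · intro s hs
      exact hA (a - t + s) (by omega)
  refine ⟨f (a - t), hS _ (by omega), ?_, t, hsuf⟩
  have hlab := hasWalkIn_label hu hpre
  rw [hlab]
  have hcast : ((a - t : ℕ) : ZMod κ) = -(t : ZMod κ) := by
    have h1 : ((a : ℕ) : ZMod κ) = 0 := (ZMod.natCast_eq_zero_iff a κ).mpr hκa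
    have h2 : ((a - t : ℕ) : ZMod κ) + (t : ZMod κ) = ((a : ℕ) : ZMod κ) := by
      rw [← Nat.cast_add, Nat.sub_add_cancel hta]
    rw [h1] at h2
    linear_combination h2
  rw [hcast, htdef, ZMod.natCast_val, ZMod.cast_id]
  ring


/-- `(k, l) ∈ I(D_{p,p+1})`: some arc goes from a vertex of `U_k^{(p)}` to a vertex of
`U_l^{(p+1)}`. -/
def InI (D : Digraph' V) (Vset : ℕ → Set V) {κ : ℕ → ℕ}
    (u : ∀ i : ℕ, V → ZMod (κ i)) (p : ℕ) (k : ZMod (κ p)) (l : ZMod (κ (p + 1))) : Prop :=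
  ∃ x ∈ Vset p, ∃ y ∈ Vset (p + 1), D.Adj x y ∧ u p x = k ∧ u (p + 1) y = l

/-- `(i, j)` is an edge of the bipartite graph `B_{p,p+1}`. -/
def BAdj (D : Digraph' V) (Vset : ℕ → Set V) {κ : ℕ → ℕ}
    (u : ∀ i : ℕ, V → ZMod (κ i)) (p : ℕ) (i : ZMod (κ p)) (j : ZMod (κ (p + 1))) : Prop :=
  ∃ (k : ZMod (κ p)) (l : ZMod (κ (p + 1))) (a : ℤ),
    InI D Vset u p k l ∧ i = k + 1 + (a : ZMod (κ p)) ∧ j = l + (a : ZMod (κ (p + 1)))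

/-- The competition skeleton graph (CS-graph) `PT_D^{(η)}`: vertices are pairs `⟨r, i⟩`
with `i ∈ ZMod (κ r)` (only `1 ≤ r ≤ η` carries edges); `⟨p, i⟩` and `⟨p+1, j⟩` are
adjacent exactly when `i` and `j` are adjacent in `B_{p,p+1}`. -/
def csGraph (D : Digraph' V) (Vset : ℕ → Set V) {κ : ℕ → ℕ}
    (u : ∀ i : ℕ, V → ZMod (κ i)) (η : ℕ) : SimpleGraph ((r : ℕ) × ZMod (κ r)) where
  Adj a b := ∃ p, 1 ≤ p ∧ p + 1 ≤ η ∧ ∃ (i : ZMod (κ p)) (j : ZMod (κ (p + 1))),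
    BAdj D Vset u p i j ∧
    ((a = ⟨p, i⟩ ∧ b = ⟨p + 1, j⟩) ∨ (a = ⟨p + 1, j⟩ ∧ b = ⟨p, i⟩))
  symm := by
    constructor
    rintro a b ⟨p, h1, h2, i, j, hB, hab⟩
    exact ⟨p, h1, h2, i, j, hB,
      hab.elim (fun h => Or.inr ⟨h.2, h.1⟩) (fun h => Or.inl ⟨h.2, h.1⟩)⟩
  loopless := by
    constructor
    rintro a ⟨p, _, _, i, j, _, hab⟩
    rcases hab with ⟨ha, hb⟩ | ⟨ha, hb⟩
    · have h : p = p + 1 := congrArg Sigma.fst (ha.symm.trans hb)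
      omega
    · have h : p + 1 = p := congrArg Sigma.fst (ha.symm.trans hb)
      omega

end Digraph'


lemma int_arith_helper (K1 K2 : ℤ) (hK1 : 0 < K1) (hK2 : 0 < K2) (c1 c2 T1 T2 : ℤ)
    (hc1 : 0 ≤ c1) (hc2 : 0 ≤ c2) (hT1 : 0 ≤ T1) (hT2 : 0 ≤ T2) (a : ℤ)
    (h1 : K1 ∣ 1 + a + c1) (h2 : K2 ∣ c2 - a) :
    ∃ e1 e2 s : ℤ, 0 ≤ e1 ∧ 0 ≤ e2 ∧ 1 ≤ s ∧
      c1 + (T1 + e1) * K1 + 1 + ((T2 + e2) * K2 + c2) = 2 * s * K1 * K2 := by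
  have hbez := Int.gcd_eq_gcd_ab K1 K2
  have hgK1 : (Int.gcd K1 K2 : ℤ) ∣ K1 := Int.gcd_dvd_left K1 K2
  have hgK2 : (Int.gcd K1 K2 : ℤ) ∣ K2 := Int.gcd_dvd_right K1 K2
  have hgM : (Int.gcd K1 K2 : ℤ) ∣ (c1 + 1 + c2 + T1*K1 + T2*K2) := by
    have e : c1 + 1 + c2 + T1*K1 + T2*K2 = (1 + a + c1) + (c2 - a) + T1*K1 + T2*K2 := by
      ring
    rw [e]
    exact dvd_add (dvd_add (dvd_add (hgK1.trans h1) (hgK2.trans h2))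
      (hgK1.mul_left T1)) (hgK2.mul_left T2)
  obtain ⟨M', hM'⟩ := hgM
  set E1 : ℤ := -M' * Int.gcdA K1 K2 with hE1def
  set E2 : ℤ := -M' * Int.gcdB K1 K2 with hE2def
  set q1 : ℤ := E1 / (2 * K2) with hq1def
  set q2 : ℤ := E2 / (2 * K1) with hq2def
  set e1 : ℤ := E1 % (2 * K2) with he1def
  set e2 : ℤ := E2 % (2 * K1) with he2def
  have he1 : 0 ≤ e1 := Int.emod_nonneg E1 (by positivity)
  have he2 : 0 ≤ e2 := Int.emod_nonneg E2 (by positivity)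
  have d1 : 2 * K2 * q1 + e1 = E1 := Int.mul_ediv_add_emod E1 (2 * K2)
  have d2 : 2 * K1 * q2 + e2 = E2 := Int.mul_ediv_add_emod E2 (2 * K1)
  have heq : c1 + (T1 + e1) * K1 + 1 + ((T2 + e2) * K2 + c2)
      = 2 * (-(q1 + q2)) * K1 * K2 := by
    linear_combination hM' + K1 * d1 + K2 * d2 + M' * hbez
  have hspos : 1 ≤ -(q1 + q2) := by
    by_contra hcon
    push_neg at hcon
    have hle : 2 * -(q1 + q2) ≤ 0 := by omega
    have hk : (0:ℤ) ≤ K1 * K2 := mul_nonneg hK1.le hK2.le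
    have hprod : 2 * -(q1 + q2) * K1 * K2 ≤ 0 := by nlinarith [hle, hk]
    linarith [heq, hprod, mul_nonneg (by linarith : (0:ℤ) ≤ T1 + e1) hK1.le,
      mul_nonneg (by linarith : (0:ℤ) ≤ T2 + e2) hK2.le]
  exact ⟨e1, e2, -(q1 + q2), he1, he2, hspos, heq⟩

open Digraph' in
/-- `(i,j)` is an edge of `B_{1,2}` iff some `u ∈ U_i^{(1)}`,
`v ∈ U_j^{(2)}` are joined by a directed walk of length `2sκ₁κ₂` for some `s ≥ 1`. -/
theorem stmt13 {V : Type*} [Fintype V] (D : Digraph' V) (Vset : ℕ → Set V)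
    (hD : D.IsLinConn 2 Vset)
    (h1 : ¬ IsTrivialComp (Vset 1)) (h2 : ¬ IsTrivialComp (Vset 2))
    (κ : ℕ → ℕ) (u : ∀ i : ℕ, V → ZMod (κ i))
    (hκ : ∀ i, 1 ≤ i → i ≤ 2 → IsImprimIndex D (Vset i) (κ i))
    (hu : ∀ i, 1 ≤ i → i ≤ 2 → IsImprimLabelling D (Vset i) (u i))
    (i : ZMod (κ 1)) (j : ZMod (κ 2)) :
    BAdj D Vset u 1 i j ↔
    (∃ x ∈ Vset 1, u 1 x = i ∧ ∃ y ∈ Vset 2, u 2 y = j ∧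
       ∃ s, 1 ≤ s ∧ D.HasWalk (2 * s * κ 1 * κ 2) x y) := by
  classical
  have hst1 : ∀ x ∈ Vset 1, ∀ y ∈ Vset 1, ∃ m, D.HasWalkIn (Vset 1) m x y :=
    fun x hx y hy => hD.strong 1 (by norm_num) (by norm_num) x hx y hy
  have hst2 : ∀ x ∈ Vset 2, ∀ y ∈ Vset 2, ∃ m, D.HasWalkIn (Vset 2) m x y :=
    fun x hx y hy => hD.strong 2 (by norm_num) (by norm_num) x hx y hy
  have hκ1 := hκ 1 (by norm_num) (by norm_num)
  have hκ2 := hκ 2 (by norm_num) (by norm_num)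
  have hu1 := hu 1 (by norm_num) (by norm_num)
  have hu2 := hu 2 (by norm_num) (by norm_num)
  have hdisj : ∀ v, v ∈ Vset 1 → v ∈ Vset 2 → False := by
    intro v hv1 hv2
    have := hD.disjoint' 1 2 (by norm_num) (by norm_num) (by norm_num) (by norm_num) v hv1 hv2
    omega
  have hcov : ∀ w, w ∈ Vset 1 ∨ w ∈ Vset 2 := by
    intro w
    obtain ⟨ι, hι1, hι2, hm⟩ := hD.cover w
    have : ι = 1 ∨ ι = 2 := by omega
    rcases this with h | h <;> subst h
    · exact Or.inl hm
    · exact Or.inr hm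
  have harc2 : ∀ w z, D.Adj w z → w ∈ Vset 2 → z ∈ Vset 2 := by
    intro w z hadj hw
    obtain ⟨ι, hι1, hcase⟩ := hD.arcs w z hadj
    rcases hcase with ⟨hι2, hw', hz'⟩ | ⟨hι2, hw', hz'⟩
    · have : ι = 1 ∨ ι = 2 := by omega
      rcases this with h | h <;> subst h
      · exact (hdisj w hw' hw).elim
      · exact hz'
    · have : ι = 1 := by omega
      subst this
      exact (hdisj w hw' hw).elim
  constructor
  · rintro ⟨k, l, a, ⟨x0, hx0, y0, hy0, hadj, hk, hl⟩, hi, hj⟩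
    have hy0' : y0 ∈ Vset 2 := hy0
    have hκ1pos : 0 < κ 1 := kappa_pos hst1 h1 hκ1 hx0
    have hκ2pos : 0 < κ 2 := kappa_pos hst2 h2 hκ2 hy0'
    obtain ⟨x, hxS, hux, c1, hw1⟩ := exists_label_to hu1 hst1 h1 hκ1 hx0 i
    obtain ⟨y, hyS, huy, c2, hw2⟩ := exists_label_from hu2 hst2 h2 hκ2 hy0' j
    obtain ⟨T1, hT1⟩ := eventual_closed hst1 h1 hκ1 hx0
    obtain ⟨T2, hT2⟩ := eventual_closed hst2 h2 hκ2 hy0'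
    have hc1 : k = i + (c1 : ZMod (κ 1)) := by
      rw [← hk, ← hux]
      exact hasWalkIn_label hu1 hw1
    have hc2 : j = l + (c2 : ZMod (κ 2)) := by
      rw [← hl, ← huy]
      exact hasWalkIn_label hu2 hw2
    have hcong1 : ((κ 1 : ℤ)) ∣ (1 + a + (c1 : ℤ)) := by
      have hz : ((1 + a + (c1 : ℤ) : ℤ) : ZMod (κ 1)) = 0 := by
        push_cast
        linear_combination (-1 : ZMod (κ 1)) * hi - hc1
      exact (ZMod.intCast_zmod_eq_zero_iff_dvd _ _).mp hz
    have hcong2 : ((κ 2 : ℤ)) ∣ ((c2 : ℤ) - a) := by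
      have hz : (((c2 : ℤ) - a : ℤ) : ZMod (κ 2)) = 0 := by
        push_cast
        linear_combination hj - hc2
      exact (ZMod.intCast_zmod_eq_zero_iff_dvd _ _).mp hz
    obtain ⟨e1, e2, sZ, he1, he2, hsZ, heq⟩ :=
      int_arith_helper (κ 1 : ℤ) (κ 2 : ℤ) (by exact_mod_cast hκ1pos)
        (by exact_mod_cast hκ2pos) (c1 : ℤ) (c2 : ℤ) (T1 : ℤ) (T2 : ℤ)
        (by positivity) (by positivity) (by positivity) (by positivity) a hcong1 hcong2
    have hsN : 1 ≤ sZ.toNat := by omega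
    have hlen : c1 + (T1 + e1.toNat) * κ 1 + 1 + ((T2 + e2.toNat) * κ 2 + c2)
        = 2 * sZ.toNat * κ 1 * κ 2 := by
      have hcast : ((c1 + (T1 + e1.toNat) * κ 1 + 1 + ((T2 + e2.toNat) * κ 2 + c2) : ℕ) : ℤ)
          = ((2 * sZ.toNat * κ 1 * κ 2 : ℕ) : ℤ) := by
        push_cast [Int.toNat_of_nonneg he1, Int.toNat_of_nonneg he2,
          Int.toNat_of_nonneg (by omega : (0:ℤ) ≤ sZ)]
        linear_combination heq
      exact_mod_cast hcast
    have w1 : D.HasWalk c1 x x0 := hw1.hasWalk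
    have wA : D.HasWalk ((T1 + e1.toNat) * κ 1) x0 x0 := (hT1 (T1 + e1.toNat) (by omega)).hasWalk
    have w3 : D.HasWalk 1 x0 y0 := hadj.hasWalk
    have wB : D.HasWalk ((T2 + e2.toNat) * κ 2) y0 y0 := (hT2 (T2 + e2.toNat) (by omega)).hasWalk
    have w5 : D.HasWalk c2 y0 y := hw2.hasWalk
    refine ⟨x, hxS, hux, y, hyS, huy, sZ.toNat, hsN, ?_⟩
    rw [show 2 * sZ.toNat * κ 1 * κ 2 = c1 + (T1 + e1.toNat) * κ 1 + 1 + ((T2 + e2.toNat) * κ 2 + c2)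
      from hlen.symm]
    exact ((w1.trans wA).trans w3).trans (wB.trans w5)
  · rintro ⟨x, hx, hux, y, hy, huy, s, hs, hwalk⟩
    obtain ⟨f, hf0, hfM, hfA⟩ := hwalk
    set M : ℕ := 2 * s * κ 1 * κ 2 with hMdef
    have hdvd1 : κ 1 ∣ M := ⟨2 * s * κ 2, by rw [hMdef]; ring⟩
    have hdvd2 : κ 2 ∣ M := ⟨2 * s * κ 1, by rw [hMdef]; ring⟩
    have hMne : M ≠ 0 := by
      intro h
      rw [h] at hfM
      have hxy : x = y := by rw [← hf0, hfM]
      exact hdisj x hx (hxy ▸ hy)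
    have hcex : ∃ t, t ≤ M ∧ f t ∈ Vset 2 := ⟨M, le_rfl, by rw [hfM]; exact hy⟩
    obtain ⟨hcM, hcV2⟩ := Nat.find_spec hcex
    set c := Nat.find hcex with hcdef
    have hc1 : 1 ≤ c := by
      rcases Nat.eq_zero_or_pos c with h | h
      · exfalso
        rw [h] at hcV2
        rw [hf0] at hcV2
        exact hdisj x hx hcV2
      · exact h
    have hV1 : ∀ t, t < c → f t ∈ Vset 1 := by
      intro t ht
      have hnot := Nat.find_min hcex ht
      rcases hcov (f t) with h | h
      · exact h
      · exact absurd ⟨by omega, h⟩ hnot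
    have hV2 : ∀ t, c ≤ t → t ≤ M → f t ∈ Vset 2 := by
      intro t ht
      induction t, ht using Nat.le_induction with
      | base => exact fun _ => hcV2
      | succ n hn ih =>
        intro hn1
        exact harc2 _ _ (hfA n (by omega)) (ih (by omega))
    have walk1 : D.HasWalkIn (Vset 1) (c-1) x (f (c-1)) :=
      ⟨f, hf0, rfl, fun t ht => hV1 t (by omega), fun t ht => hfA t (by omega)⟩
    have walk2 : D.HasWalkIn (Vset 2) (M-c) (f c) y := by
      refine ⟨fun t => f (c + t), rfl, ?_, fun t ht => hV2 (c+t) (by omega) (by omega),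
        fun t ht => hfA (c+t) (by omega)⟩
      show f (c + (M - c)) = y
      rw [show c + (M - c) = M from by omega, hfM]
    have harc : D.Adj (f (c-1)) (f c) := by
      have := hfA (c-1) (by omega)
      rwa [show c - 1 + 1 = c from by omega] at this
    have hlab1 : u 1 (f (c-1)) = u 1 x + ((c-1 : ℕ) : ZMod (κ 1)) :=
      hasWalkIn_label hu1 walk1
    have hlab2 : u 2 y = u 2 (f c) + ((M - c : ℕ) : ZMod (κ 2)) :=
      hasWalkIn_label hu2 walk2
    have hMz1 : ((M : ℕ) : ZMod (κ 1)) = 0 := (ZMod.natCast_eq_zero_iff _ _).mpr hdvd1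
    have hsum : ((c - 1 : ℕ) : ZMod (κ 1)) + 1 + ((M - c : ℕ) : ZMod (κ 1)) = 0 := by
      have hn : (c - 1) + 1 + (M - c) = M := by omega
      calc ((c - 1 : ℕ) : ZMod (κ 1)) + 1 + ((M - c : ℕ) : ZMod (κ 1))
          = (((c - 1) + 1 + (M - c) : ℕ) : ZMod (κ 1)) := by push_cast; ring
        _ = ((M : ℕ) : ZMod (κ 1)) := by rw [hn]
        _ = 0 := hMz1
    refine ⟨u 1 (f (c-1)), u 2 (f c), ((M - c : ℕ) : ℤ),
      ⟨f (c-1), hV1 _ (by omega), f c, hcV2, harc, rfl, rfl⟩, ?_, ?_⟩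
    · rw [hlab1, hux]
      push_cast
      linear_combination -hsum
    · rw [← huy, hlab2]
      push_cast
      ring
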